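/- Let μ be a nontrivial Radon outer measure on ℝ^n satisfying r^p/C ≤ μ(B_r(x)) ≤ C r^q for all x ∈ spt μ, r ∈ (0, r̄), with q ≤ min{n, p}. Then for every ε > 0 and every h > np/q − q there exists an open set U ⊂ ℝ^n with μ(U) < ε and b^{μ,h}(U) = spt μ. -/

import Mathlib

open MeasureTheory Metric Filter Set Topology

noncomputable section

/-- The support of a measure `μ` on `ℝ^n`: points all of whose balls have positive measure. -/
def spt {n : ℕ} (μ : Measure (EuclideanSpace ℝ (Fin n))) : Set (EuclideanSpace ℝ (Fin n)) :=
  {x | ∀ r : ℝ, 0 < r → 0 < μ (Metric.ball x r)}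

/-- The set of `h`-superdensity points of `E` with respect to `μ`. -/
def sdp {n : ℕ} (μ : Measure (EuclideanSpace ℝ (Fin n))) (h : ℝ)
    (E : Set (EuclideanSpace ℝ (Fin n))) : Set (EuclideanSpace ℝ (Fin n)) :=
  {x | x ∈ spt μ ∧
    Filter.Tendsto
      (fun r : ℝ => μ (Metric.ball x r \ E) / (μ (Metric.ball x r) * ENNReal.ofReal (r ^ h)))
      (nhdsWithin 0 (Set.Ioi 0)) (nhds 0)}

/-- The base operator `b^{μ,h}` associated to `μ` and `h`. -/
def baseOp {n : ℕ} (μ : Measure (EuclideanSpace ℝ (Fin n))) (h : ℝ)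
    (A : Set (EuclideanSpace ℝ (Fin n))) : Set (EuclideanSpace ℝ (Fin n)) :=
  {x | x ∈ spt μ ∧
    0 < Filter.limsup
      (fun r : ℝ => μ (Metric.ball x r ∩ A) / (μ (Metric.ball x r) * ENNReal.ofReal (r ^ h)))
      (nhdsWithin 0 (Set.Ioi 0))}

/-- Existence of a maximal `δ`-separated subset of any set in a metric space. -/
lemma exists_net {X : Type*} [MetricSpace X] (s : Set X) {δ : ℝ} (hδ : 0 < δ) :
    ∃ t : Set X, t ⊆ s ∧ t.Pairwise (fun y z => δ ≤ dist y z) ∧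
      ∀ x ∈ s, ∃ y ∈ t, dist x y < δ := by
  have hz : ∀ c ⊆ {t : Set X | t ⊆ s ∧ t.Pairwise fun y z => δ ≤ dist y z},
      IsChain (· ⊆ ·) c → ∃ ub ∈ {t : Set X | t ⊆ s ∧ t.Pairwise fun y z => δ ≤ dist y z},
        ∀ s ∈ c, s ⊆ ub := by
    intro c hcS hchain
    refine ⟨⋃₀ c, ⟨Set.sUnion_subset fun t ht => (hcS ht).1, ?_⟩,
      fun t ht => Set.subset_sUnion_of_mem ht⟩
    intro y hy z hz hyz
    obtain ⟨ty, hty, hyty⟩ := hy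
    obtain ⟨tz, htz, hztz⟩ := hz
    rcases hchain.total hty htz with hsub | hsub
    · exact (hcS htz).2 (hsub hyty) hztz hyz
    · exact (hcS hty).2 hyty (hsub hztz) hyz
  obtain ⟨m, hm⟩ := zorn_subset {t : Set X | t ⊆ s ∧ t.Pairwise fun y z => δ ≤ dist y z} hz
  · refine ⟨m, hm.prop.1, hm.prop.2, ?_⟩
    intro x hx
    by_contra hcon
    push_neg at hcon
    have hxm : x ∉ m := by
      intro hxm
      have h1 := hcon x hxm
      rw [dist_self] at h1
      linarith
    have hmem : insert x m ∈ {t : Set X | t ⊆ s ∧ t.Pairwise fun y z => δ ≤ dist y z} := by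
      refine ⟨insert_subset hx hm.prop.1, ?_⟩
      haveI : Std.Symm (fun y z : X => δ ≤ dist y z) := ⟨fun a b hab => by rwa [dist_comm]⟩
      rw [Set.pairwise_insert_of_symm]
      exact ⟨hm.prop.2, fun b hb _ => hcon b hb⟩
    have := hm.2 hmem (Set.subset_insert x m)
    exact hxm (this (Set.mem_insert x m))

/-- A `δ`-separated subset of a compact set is finite. -/
lemma finite_of_separated {X : Type*} [MetricSpace X] {t K : Set X} (hK : IsCompact K)
    (htK : t ⊆ K) {δ : ℝ} (hδ : 0 < δ)
    (hsep : t.Pairwise fun y z => δ ≤ dist y z) : t.Finite := by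
  obtain ⟨u, hufin, hcover⟩ := (totallyBounded_iff.mp hK.totallyBounded) (δ / 2) (by positivity)
  have : t ⊆ ⋃ c ∈ u, t ∩ ball c (δ / 2) := by
    intro y hy
    obtain ⟨c, hc, hyc⟩ := Set.mem_iUnion₂.mp (hcover (htK hy))
    exact Set.mem_iUnion₂.mpr ⟨c, hc, hy, hyc⟩
  refine Set.Finite.subset (Set.Finite.biUnion hufin fun c _ => ?_) this
  refine Set.Subsingleton.finite ?_
  intro y hy z hz
  by_contra hyz
  have h1 := hsep hy.1 hz.1 hyz
  have h2 : dist y z < δ := by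
    have := dist_triangle y c z
    rw [dist_comm c z] at this
    have hy2 := hy.2; have hz2 := hz.2
    simp only [mem_ball] at hy2 hz2
    linarith
  linarith

lemma exists_delta {σ : ℝ} (hσ : 0 < σ) {m c : ℝ} (hm : 0 < m) (hc : 0 < c) :
    ∃ δ : ℝ, 0 < δ ∧ δ ≤ m ∧ δ ^ σ ≤ c := by
  refine ⟨min m (c ^ (1 / σ)), lt_min hm (Real.rpow_pos_of_pos hc _), min_le_left _ _, ?_⟩
  have h1 : min m (c ^ (1 / σ)) ≤ c ^ (1 / σ) := min_le_right _ _
  have h0 : (0:ℝ) ≤ min m (c ^ (1 / σ)) := (lt_min hm (Real.rpow_pos_of_pos hc _)).le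
  calc min m (c ^ (1 / σ)) ^ σ ≤ (c ^ (1 / σ)) ^ σ := Real.rpow_le_rpow h0 h1 hσ.le
    _ = c := by rw [← Real.rpow_mul hc.le, one_div_mul_cancel hσ.ne', Real.rpow_one]

set_option maxHeartbeats 1000000 in
theorem stmt_13 {n : ℕ} (μ : Measure (EuclideanSpace ℝ (Fin n)))
    [IsLocallyFiniteMeasure μ] [μ.Regular] (hspt : (spt μ).Nonempty)
    (C p q rbar : ℝ) (hC : 0 < C) (hp : 0 < p) (hq : 0 < q) (hrbar : 0 < rbar)
    (hqmin : q ≤ min (n : ℝ) p)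
    (hbound : ∀ x ∈ spt μ, ∀ r : ℝ, 0 < r → r < rbar →
      ENNReal.ofReal (r ^ p / C) ≤ μ (Metric.ball x r) ∧
        μ (Metric.ball x r) ≤ ENNReal.ofReal (C * r ^ q)) :
    ∀ ε : ℝ, 0 < ε → ∀ h : ℝ, (n : ℝ) * p / q - q < h →
      ∃ U : Set (EuclideanSpace ℝ (Fin n)), IsOpen U ∧
        μ U < ENNReal.ofReal ε ∧ baseOp μ h U = spt μ := by
  intro ε hε h hh
  have hqn : q ≤ (n : ℝ) := le_trans hqmin (min_le_left _ _)
  have hqp : q ≤ p := le_trans hqmin (min_le_right _ _)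
  have hn : (0:ℝ) < n := lt_of_lt_of_le hq hqn
  -- the exponent α
  set α : ℝ := (q + h) / p with hα_def
  have hαp : α * p = q + h := div_mul_cancel₀ _ hp.ne'
  have hnpq : p ≤ (n : ℝ) * p / q := by
    rw [le_div_iff₀ hq]; nlinarith
  have hqh : p < q + h := by linarith
  have hα1 : 1 ≤ α := by
    rw [le_div_iff₀ hp]; linarith
  -- the exponent σ
  set σ : ℝ := α * q - n with hσ_def
  have hσ : 0 < σ := by
    have h1 : (n:ℝ) * p < (q + h) * q := by
      have := (div_lt_iff₀ hq).mp (by linarith : (n : ℝ) * p / q < q + h)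
      linarith
    have h2 : (n:ℝ) < α * q := by
      rw [hα_def, div_mul_eq_mul_div, lt_div_iff₀ hp]
      nlinarith
    linarith
  -- volume constants
  set B : ENNReal := volume (ball (0 : EuclideanSpace ℝ (Fin n)) 1) with hB_def
  have hB0 : B ≠ 0 := (measure_ball_pos _ _ one_pos).ne'
  have hBtop : B ≠ ⊤ := measure_ball_lt_top.ne
  set Bt : ℝ := B.toReal with hBt_def
  have hBt0 : 0 < Bt := ENNReal.toReal_pos hB0 hBtop
  -- the per-scale construction
  have key : ∀ k : ℕ, ∃ δ : ℝ, ∃ t : Finset (EuclideanSpace ℝ (Fin n)), 0 < δ ∧ δ ≤ (1/2 : ℝ) ^ k ∧ δ ≤ 1 ∧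
      3 * δ < rbar ∧ (↑t : Set (EuclideanSpace ℝ (Fin n))) ⊆ spt μ ∧
      (∀ x ∈ spt μ ∩ closedBall (0 : EuclideanSpace ℝ (Fin n)) k, ∃ y ∈ t, dist x y < δ) ∧
      (∑ y ∈ t, μ (ball y (δ ^ α)) ≤ ENNReal.ofReal (ε / 4 * (1/2) ^ k)) := by
    intro k
    set V : ENNReal := volume (closedBall (0 : EuclideanSpace ℝ (Fin n)) (k + 1)) with hV_def
    have hVtop : V ≠ ⊤ := measure_closedBall_lt_top.ne
    set Vt : ℝ := V.toReal with hVt_def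
    have hVt0 : 0 ≤ Vt := ENNReal.toReal_nonneg
    set ε' : ℝ := ε / 4 * (1/2) ^ k with hε'_def
    have hε'0 : 0 < ε' := by positivity
    set c : ℝ := ε' * Bt / ((Vt + 1) * C * 2 ^ n) with hc_def
    have hc0 : 0 < c := by positivity
    obtain ⟨δ, hδ0, hδm, hδσ⟩ := exists_delta hσ
      (show (0:ℝ) < min (min 1 ((1/2:ℝ)^k)) (rbar/4) by positivity) hc0
    have hδ1 : δ ≤ 1 := hδm.trans ((min_le_left _ _).trans (min_le_left _ _))
    have hδhalf : δ ≤ (1/2:ℝ)^k := hδm.trans ((min_le_left _ _).trans (min_le_right _ _))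
    have hδrbar4 : δ ≤ rbar / 4 := hδm.trans (min_le_right _ _)
    have h3δ : 3 * δ < rbar := by linarith
    obtain ⟨T, hTs, hTsep, hTnet⟩ := exists_net (spt μ ∩ closedBall (0 : EuclideanSpace ℝ (Fin n)) k) hδ0
    have hTfin : T.Finite := finite_of_separated (isCompact_closedBall (0 : EuclideanSpace ℝ (Fin n)) k)
      (fun y hy => (hTs hy).2) hδ0 hTsep
    refine ⟨δ, hTfin.toFinset, hδ0, hδhalf, hδ1, h3δ, ?_, ?_, ?_⟩
    · intro y hy
      rw [Set.Finite.coe_toFinset] at hy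
      exact (hTs hy).1
    · intro x hx
      obtain ⟨y, hy, hxy⟩ := hTnet x hx
      exact ⟨y, hTfin.mem_toFinset.mpr hy, hxy⟩
    -- the measure estimate
    set ρ : ℝ := δ ^ α with hρ_def
    have hρ0 : 0 < ρ := Real.rpow_pos_of_pos hδ0 _
    have hρδ : ρ ≤ δ := by
      calc ρ ≤ δ ^ (1:ℝ) := Real.rpow_le_rpow_of_exponent_ge hδ0 hδ1 hα1
        _ = δ := Real.rpow_one δ
    have hρrbar : ρ < rbar := by linarith
    -- each ball has small measure
    have hball : ∀ y ∈ hTfin.toFinset, μ (ball y ρ) ≤ ENNReal.ofReal (C * ρ ^ q) := by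
      intro y hy
      rw [Set.Finite.mem_toFinset] at hy
      exact (hbound y (hTs hy).1 ρ hρ0 hρrbar).2
    have hsum1 : ∑ y ∈ hTfin.toFinset, μ (ball y ρ) ≤
        (hTfin.toFinset.card : ENNReal) * ENNReal.ofReal (C * ρ ^ q) := by
      calc ∑ y ∈ hTfin.toFinset, μ (ball y ρ) ≤
          ∑ _y ∈ hTfin.toFinset, ENNReal.ofReal (C * ρ ^ q) := Finset.sum_le_sum hball
        _ = (hTfin.toFinset.card : ENNReal) * ENNReal.ofReal (C * ρ ^ q) := by
            rw [Finset.sum_const, nsmul_eq_mul]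
    -- counting via disjoint balls
    have hdisj : (↑hTfin.toFinset : Set (EuclideanSpace ℝ (Fin n))).PairwiseDisjoint (fun y => ball y (δ/2)) := by
      intro y hy z hz hyz
      rw [Set.Finite.coe_toFinset] at hy hz
      exact ball_disjoint_ball (by linarith [hTsep hy hz hyz])
    have hcount : (hTfin.toFinset.card : ENNReal) * (ENNReal.ofReal ((δ/2) ^ n) * B) ≤ V := by
      have hvol : ∀ y : EuclideanSpace ℝ (Fin n), volume (ball y (δ/2)) = ENNReal.ofReal ((δ/2) ^ n) * B := by
        intro y
        rw [hB_def, Measure.addHaar_ball_of_pos volume y (by positivity : (0:ℝ) < δ/2)]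
        congr 2
        simp [finrank_euclideanSpace_fin]
      have hsub : (⋃ y ∈ hTfin.toFinset, ball y (δ/2)) ⊆ closedBall (0 : EuclideanSpace ℝ (Fin n)) (k + 1) := by
        intro z hz
        obtain ⟨y, hy, hzy⟩ := Set.mem_iUnion₂.mp hz
        rw [Set.Finite.mem_toFinset] at hy
        have h1 : dist y 0 ≤ k := mem_closedBall.mp (hTs hy).2
        have h2 : dist z y < δ/2 := mem_ball.mp hzy
        have := dist_triangle z y 0
        exact mem_closedBall.mpr (by linarith)
      calc (hTfin.toFinset.card : ENNReal) * (ENNReal.ofReal ((δ/2) ^ n) * B)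
          = ∑ y ∈ hTfin.toFinset, volume (ball y (δ/2)) := by
            rw [Finset.sum_congr rfl fun y _ => hvol y, Finset.sum_const, nsmul_eq_mul]
        _ = volume (⋃ y ∈ hTfin.toFinset, ball y (δ/2)) :=
            (measure_biUnion_finset hdisj fun y _ => measurableSet_ball).symm
        _ ≤ V := measure_mono hsub
    -- combine
    set w : ENNReal := ENNReal.ofReal ((δ/2) ^ n) * B with hw_def
    have hw0 : w ≠ 0 := by
      apply mul_ne_zero _ hB0
      simp only [ne_eq, ENNReal.ofReal_eq_zero, not_le]
      positivity
    have hwtop : w ≠ ⊤ := ENNReal.mul_ne_top ENNReal.ofReal_ne_top hBtop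
    -- real inequality
    have hreal : Vt * (C * ρ ^ q) ≤ ε' * ((δ/2) ^ n * Bt) := by
      have hδn : (0:ℝ) < δ ^ n := by positivity
      have h2n : (0:ℝ) < 2 ^ n := by positivity
      have hrw : ρ ^ q = δ ^ (n:ℝ) * δ ^ σ := by
        rw [hρ_def, ← Real.rpow_natCast δ n] at *
        rw [← Real.rpow_mul hδ0.le, ← Real.rpow_add hδ0]
        · congr 1
          rw [hσ_def]; ring
      have hδσ' : Vt * C * δ ^ σ ≤ ε' * Bt / 2 ^ n := by
        have h1 : Vt * C * δ ^ σ ≤ (Vt + 1) * C * c := by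
          have := mul_le_mul_of_nonneg_left hδσ (by positivity : (0:ℝ) ≤ Vt * C)
          nlinarith [Real.rpow_nonneg hδ0.le σ, hc0]
        have h2 : (Vt + 1) * C * c = ε' * Bt / 2 ^ n := by
          rw [hc_def]
          field_simp
        linarith
      have hδnn : δ ^ (n:ℝ) = δ ^ n := Real.rpow_natCast δ n
      rw [hrw, hδnn]
      have : (δ/2) ^ n = δ ^ n / 2 ^ n := div_pow δ 2 n
      rw [this]
      calc Vt * (C * (δ ^ n * δ ^ σ)) = (Vt * C * δ ^ σ) * δ ^ n := by ring
        _ ≤ (ε' * Bt / 2 ^ n) * δ ^ n := by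
            exact mul_le_mul_of_nonneg_right hδσ' hδn.le
        _ = ε' * (δ ^ n / 2 ^ n * Bt) := by ring
    -- lift to ENNReal
    have hVc : V * ENNReal.ofReal (C * ρ ^ q) ≤ ENNReal.ofReal ε' * w := by
      have hV_eq : V = ENNReal.ofReal Vt := (ENNReal.ofReal_toReal hVtop).symm
      have hB_eq : B = ENNReal.ofReal Bt := (ENNReal.ofReal_toReal hBtop).symm
      rw [hV_eq, hw_def, hB_eq, ← ENNReal.ofReal_mul ENNReal.toReal_nonneg,
        ← ENNReal.ofReal_mul (by positivity), ← ENNReal.ofReal_mul hε'0.le]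
      exact ENNReal.ofReal_le_ofReal (by rw [mul_assoc] at hreal ⊢; exact hreal)
    have hcard : (hTfin.toFinset.card : ENNReal) * ENNReal.ofReal (C * ρ ^ q) ≤
        ENNReal.ofReal ε' := by
      have h1 : (hTfin.toFinset.card : ENNReal) ≤ V / w :=
        (ENNReal.le_div_iff_mul_le (Or.inl hw0) (Or.inl hwtop)).mpr hcount
      calc (hTfin.toFinset.card : ENNReal) * ENNReal.ofReal (C * ρ ^ q)
          ≤ (V / w) * ENNReal.ofReal (C * ρ ^ q) :=
            mul_le_mul_left h1 _
        _ = (V * ENNReal.ofReal (C * ρ ^ q)) / w := by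
            rw [div_eq_mul_inv, div_eq_mul_inv]; ring
        _ ≤ (ENNReal.ofReal ε' * w) / w := by
            exact ENNReal.div_le_div_right hVc w
        _ = ENNReal.ofReal ε' := by
            rw [mul_div_assoc, ENNReal.div_self hw0 hwtop, mul_one]
    exact hsum1.trans hcard
  -- choose the data
  choose δ t hδ0 hδhalf hδ1 hδrbar htspt hnet hsum using key
  set ρ : ℕ → ℝ := fun k => δ k ^ α with hρ_def
  have hρ0 : ∀ k, 0 < ρ k := fun k => Real.rpow_pos_of_pos (hδ0 k) _
  have hρδ : ∀ k, ρ k ≤ δ k := by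
    intro k
    calc ρ k ≤ δ k ^ (1:ℝ) := Real.rpow_le_rpow_of_exponent_ge (hδ0 k) (hδ1 k) hα1
      _ = δ k := Real.rpow_one _
  refine ⟨⋃ k, ⋃ y ∈ t k, ball y (ρ k), ?_, ?_, ?_⟩
  · exact isOpen_iUnion fun k => isOpen_biUnion fun y _ => isOpen_ball
  · -- measure bound
    have h1 : μ (⋃ k, ⋃ y ∈ t k, ball y (ρ k)) ≤ ∑' k, ENNReal.ofReal (ε / 4 * (1/2) ^ k) := by
      calc μ (⋃ k, ⋃ y ∈ t k, ball y (ρ k)) ≤ ∑' k, μ (⋃ y ∈ t k, ball y (ρ k)) :=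
          measure_iUnion_le _
        _ ≤ ∑' k, ENNReal.ofReal (ε / 4 * (1/2) ^ k) := by
            refine ENNReal.tsum_le_tsum fun k => le_trans (measure_biUnion_finset_le _ _) (hsum k)
    have h2 : ∑' (k : ℕ), ENNReal.ofReal (ε / 4 * (1/2) ^ k) = ENNReal.ofReal (ε / 2) := by
      rw [← ENNReal.ofReal_tsum_of_nonneg (fun k => by positivity)
        (Summable.mul_left _ (summable_geometric_of_lt_one (by norm_num) (by norm_num)))]
      congr 1
      rw [tsum_mul_left, tsum_geometric_of_lt_one (by norm_num) (by norm_num)]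
      norm_num
      ring
    rw [h2] at h1
    exact lt_of_le_of_lt h1 (ENNReal.ofReal_lt_ofReal_iff hε |>.mpr (by linarith))
  · -- baseOp equality
    ext x
    constructor
    · exact fun hx => hx.1
    · intro hx
      refine ⟨hx, ?_⟩
      set U : Set (EuclideanSpace ℝ (Fin n)) := ⋃ k, ⋃ y ∈ t k, ball y (ρ k) with hU_def
      set f : ℝ → ENNReal := fun r =>
        μ (ball x r ∩ U) / (μ (ball x r) * ENNReal.ofReal (r ^ h)) with hf_def
      set c₀ : ENNReal := ENNReal.ofReal (1 / (C ^ 2 * 3 ^ (q + h))) with hc₀_def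
      have hc₀0 : 0 < c₀ := by
        rw [hc₀_def, ENNReal.ofReal_pos]
        have : (0:ℝ) < 3 ^ (q+h) := Real.rpow_pos_of_pos (by norm_num) _
        positivity
      obtain ⟨K, hK⟩ := exists_nat_ge ‖x‖
      have hfk : ∀ k : ℕ, K ≤ k → c₀ ≤ f (3 * δ k) := by
        intro k hKk
        have hxk : x ∈ spt μ ∩ closedBall (0 : EuclideanSpace ℝ (Fin n)) k := by
          refine ⟨hx, mem_closedBall.mpr ?_⟩
          rw [dist_zero_right]
          exact hK.trans (by exact_mod_cast hKk)
        obtain ⟨y, hyt, hxy⟩ := hnet k x hxk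
        have hysub : ball y (ρ k) ⊆ ball x (3 * δ k) := by
          intro z hz
          rw [mem_ball] at hz ⊢
          have := dist_triangle z y x
          rw [dist_comm x y] at hxy
          have := hρδ k
          have := hδ0 k
          linarith [dist_triangle z y x]
        have hyU : ball y (ρ k) ⊆ U := by
          rw [hU_def]
          exact le_iSup_of_le k (le_iSup₂_of_le y hyt le_rfl)
        have hNum : ENNReal.ofReal (ρ k ^ p / C) ≤ μ (ball x (3 * δ k) ∩ U) := by
          refine le_trans ?_ (measure_mono (Set.subset_inter hysub hyU))
          exact (hbound y (htspt k hyt) (ρ k) (hρ0 k) (by linarith [hρδ k, hδrbar k, hδ0 k])).1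
        have h3δ0 : 0 < 3 * δ k := by linarith [hδ0 k]
        have hDen : μ (ball x (3 * δ k)) * ENNReal.ofReal ((3 * δ k) ^ h) ≤
            ENNReal.ofReal (C * (3 * δ k) ^ (q + h)) := by
          have hub := (hbound x hx (3 * δ k) h3δ0 (hδrbar k)).2
          calc μ (ball x (3 * δ k)) * ENNReal.ofReal ((3 * δ k) ^ h)
              ≤ ENNReal.ofReal (C * (3 * δ k) ^ q) * ENNReal.ofReal ((3 * δ k) ^ h) :=
                mul_le_mul_left hub _
            _ = ENNReal.ofReal (C * (3 * δ k) ^ q * (3 * δ k) ^ h) :=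
                (ENNReal.ofReal_mul (by positivity)).symm
            _ = ENNReal.ofReal (C * (3 * δ k) ^ (q + h)) := by
                rw [mul_assoc, ← Real.rpow_add h3δ0]
        have hratio : ENNReal.ofReal (ρ k ^ p / C) / ENNReal.ofReal (C * (3 * δ k) ^ (q + h))
            ≤ f (3 * δ k) := ENNReal.div_le_div hNum hDen
        refine le_trans (le_of_eq ?_) hratio
        rw [hc₀_def, ← ENNReal.ofReal_div_of_pos]
        · congr 1
          have hρp : ρ k ^ p = δ k ^ (q + h) := by
            rw [hρ_def, ← Real.rpow_mul (hδ0 k).le, hαp]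
          have h3δ : (3 * δ k) ^ (q + h) = 3 ^ (q+h) * δ k ^ (q + h) :=
            Real.mul_rpow (by norm_num) (hδ0 k).le
          rw [hρp, h3δ]
          have hX : (0:ℝ) < δ k ^ (q + h) := Real.rpow_pos_of_pos (hδ0 k) _
          have hT : (0:ℝ) < (3:ℝ) ^ (q + h) := Real.rpow_pos_of_pos (by norm_num) _
          field_simp
        · have : (0:ℝ) < (3 * δ k) ^ (q + h) := Real.rpow_pos_of_pos h3δ0 _
          positivity
      -- the sequence 3 δ k tends to 0 within Ioi 0
      have htend : Tendsto (fun k : ℕ => 3 * δ k) atTop (nhdsWithin 0 (Set.Ioi 0)) := by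
        rw [tendsto_nhdsWithin_iff]
        constructor
        · have hgeo : Tendsto (fun k : ℕ => 3 * (1/2:ℝ) ^ k) atTop (nhds 0) := by
            have := tendsto_pow_atTop_nhds_zero_of_lt_one
              (by norm_num : (0:ℝ) ≤ 1/2) (by norm_num : (1/2:ℝ) < 1)
            simpa using this.const_mul (3:ℝ)
          refine squeeze_zero (fun k => by linarith [hδ0 k]) (fun k => ?_) hgeo
          have := hδhalf k
          linarith
        · exact Filter.Eventually.of_forall fun k => Set.mem_Ioi.mpr (by linarith [hδ0 k])
      have hfreq : ∃ᶠ r in nhdsWithin 0 (Set.Ioi 0), c₀ ≤ f r :=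
        htend.frequently ((Filter.eventually_atTop.mpr ⟨K, hfk⟩).frequently)
      exact lt_of_lt_of_le hc₀0 (Filter.le_limsup_of_frequently_le' hfreq)
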